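/- The exact solution of the LP problem maximizing ⟨c,x⟩ subject to the constraints xᵢ ≤ 200 for all i, Σᵢ xᵢ ≤ 200(n−1) + 100, Σᵢ xᵢ ≥ 100 and xᵢ ≥ 0, with c = (10n, 10(n−1), …, 10), is the point x̄ = (200, 200, …, 200, 100) for any n ≥ 2. -/

import Mathlib

open scoped RealInnerProductSpace

/-- The LP problem `max ⟪c,x⟫` subject to `0 ≤ xᵢ ≤ 200`,
`100 ≤ Σ xᵢ ≤ 200(n-1)+100`, with `cᵢ = 10(n-i)`, has the unique solution
`x̄ = (200, …, 200, 100)` for any `n ≥ 2`. -/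
theorem stmt12 {n : ℕ} (hn : 2 ≤ n)
    (c : EuclideanSpace ℝ (Fin n)) (hc : ∀ i, c i = 10 * ((n : ℝ) - i))
    (M : Set (EuclideanSpace ℝ (Fin n)))
    (hM : M = {x | (∀ i, 0 ≤ x i ∧ x i ≤ 200) ∧
      100 ≤ ∑ i, x i ∧ ∑ i, x i ≤ 200 * ((n : ℝ) - 1) + 100})
    (xbar : EuclideanSpace ℝ (Fin n))
    (hxbar : ∀ i : Fin n, xbar i = if (i : ℕ) < n - 1 then 200 else 100) :
    xbar ∈ M ∧ (∀ x ∈ M, ⟪c, x⟫ ≤ ⟪c, xbar⟫) ∧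
      ∀ x ∈ M, ⟪c, x⟫ = ⟪c, xbar⟫ → x = xbar := by
  obtain ⟨m, rfl⟩ : ∃ m, n = m + 1 := ⟨n - 1, by omega⟩
  have hm : 1 ≤ m := by omega
  subst hM
  have hxb : ∀ i : Fin (m + 1), xbar i = if (i : ℕ) < m then 200 else 100 := by
    simpa using hxbar
  have hxbc : ∀ i : Fin m, xbar i.castSucc = 200 := fun i => by
    rw [hxb]; simp [i.is_lt]
  have hxbl : xbar (Fin.last m) = 100 := by rw [hxb]; simp
  have hsumxb : ∑ i, xbar i = 200 * (m : ℝ) + 100 := by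
    rw [Fin.sum_univ_castSucc, hxbl,
      Finset.sum_congr rfl fun i _ => hxbc i]
    simp [Finset.sum_const, Finset.card_univ, mul_comm]
  have inner_eq : ∀ x : EuclideanSpace ℝ (Fin (m + 1)), ⟪c, x⟫ = ∑ i, c i * x i := by
    intro x
    simp [PiLp.inner_apply, RCLike.inner_apply]
    exact Finset.sum_congr rfl fun i _ => mul_comm _ _
  have key : ∀ x : EuclideanSpace ℝ (Fin (m + 1)),
      (∑ i, c i * xbar i) - ∑ i, c i * x i
        = 10 * ((∑ i, xbar i) - ∑ i, x i) + ∑ i, (c i - 10) * (xbar i - x i) := by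
    intro x
    rw [← Finset.sum_sub_distrib, ← Finset.sum_sub_distrib, Finset.mul_sum,
      ← Finset.sum_add_distrib]
    exact Finset.sum_congr rfl fun i _ => by ring
  have hcast : ∀ i : Fin (m + 1), (i : ℝ) ≤ m := fun i => by
    exact_mod_cast Nat.lt_succ_iff.mp i.is_lt
  have hc10 : ∀ i : Fin (m + 1), (10 : ℝ) ≤ c i := fun i => by
    have := hcast i; rw [hc]; push_cast; nlinarith
  -- membership of xbar
  have hxbM : (∀ i, 0 ≤ xbar i ∧ xbar i ≤ 200) ∧
      100 ≤ ∑ i, xbar i ∧ ∑ i, xbar i ≤ 200 * (((m : ℕ) + 1 : ℝ) - 1) + 100 := by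
    refine ⟨fun i => ?_, ?_, ?_⟩
    · rw [hxb]; split <;> norm_num
    · rw [hsumxb]; have : (1 : ℝ) ≤ m := by exact_mod_cast hm
      nlinarith
    · rw [hsumxb]; norm_num
  have hxbM' : xbar ∈ {x : EuclideanSpace ℝ (Fin (m + 1)) |
      (∀ i, 0 ≤ x i ∧ x i ≤ 200) ∧
      100 ≤ ∑ i, x i ∧ ∑ i, x i ≤ 200 * (((m + 1 : ℕ) : ℝ) - 1) + 100} := by
    simpa using hxbM
  refine ⟨hxbM', ?_, ?_⟩
  all_goals intro x hx
  · -- maximality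
    obtain ⟨hbd, _, hub⟩ := hx
    have hub' : ∑ i, x i ≤ 200 * (m : ℝ) + 100 := by
      have : (200 : ℝ) * (((m + 1 : ℕ) : ℝ) - 1) + 100 = 200 * m + 100 := by push_cast; ring
      linarith [this ▸ hub]
    have h1 : 0 ≤ 10 * ((∑ i, xbar i) - ∑ i, x i) := by
      rw [hsumxb]; linarith
    have h2 : 0 ≤ ∑ i, (c i - 10) * (xbar i - x i) := by
      refine Finset.sum_nonneg fun i _ => ?_
      rcases lt_or_ge (i : ℕ) m with h | h
      · have hx2 : xbar i - x i ≥ 0 := by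
          rw [hxb]; simp only [h, if_true]; linarith [(hbd i).2]
        exact mul_nonneg (by linarith [hc10 i]) hx2
      · have him : (i : ℝ) = m := by
          have := i.is_lt; have : (i : ℕ) = m := by omega
          exact_mod_cast this
        rw [hc]; push_cast; rw [him]; ring_nf; nlinarith
    rw [inner_eq, inner_eq]
    have := key x
    linarith
  · -- uniqueness
    intro heq
    obtain ⟨hbd, _, hub⟩ := hx
    have hub' : ∑ i, x i ≤ 200 * (m : ℝ) + 100 := by
      have h200 : (200 : ℝ) * (((m + 1 : ℕ) : ℝ) - 1) + 100 = 200 * m + 100 := by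
        push_cast; ring
      linarith [h200 ▸ hub]
    have h1 : 0 ≤ 10 * ((∑ i, xbar i) - ∑ i, x i) := by
      rw [hsumxb]; linarith
    have hterm : ∀ i ∈ Finset.univ, 0 ≤ (c i - 10) * (xbar i - x i) := by
      intro i _
      rcases lt_or_ge (i : ℕ) m with h | h
      · have hx2 : xbar i - x i ≥ 0 := by
          rw [hxb]; simp only [h, if_true]; linarith [(hbd i).2]
        exact mul_nonneg (by linarith [hc10 i]) hx2
      · have him : (i : ℝ) = m := by
          have := i.is_lt; have : (i : ℕ) = m := by omega
          exact_mod_cast this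
        rw [hc]; push_cast; rw [him]; ring_nf; nlinarith
    have h2 : 0 ≤ ∑ i, (c i - 10) * (xbar i - x i) := Finset.sum_nonneg hterm
    have hdiff : (∑ i, c i * xbar i) - ∑ i, c i * x i = 0 := by
      rw [← inner_eq, ← inner_eq, heq]; ring
    have hkey := key x
    have h1z : 10 * ((∑ i, xbar i) - ∑ i, x i) = 0 := by linarith
    have h2z : ∑ i, (c i - 10) * (xbar i - x i) = 0 := by linarith
    have heach : ∀ i ∈ Finset.univ, (c i - 10) * (xbar i - x i) = 0 :=
      (Finset.sum_eq_zero_iff_of_nonneg hterm).mp h2z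
    have hxe : ∀ i : Fin m, x i.castSucc = 200 := by
      intro i
      have h := heach i.castSucc (Finset.mem_univ _)
      have hlt : ((i.castSucc : Fin (m+1)) : ℕ) < m := i.is_lt
      have hcpos : c i.castSucc - 10 > 0 := by
        rw [hc]
        have : ((i.castSucc : Fin (m+1)) : ℝ) < m := by exact_mod_cast hlt
        push_cast; nlinarith
      have := mul_eq_zero.mp h
      rcases this with h' | h'
      · exact absurd h' (by linarith)
      · have := hxbc i; linarith
    have hsumx : ∑ i, x i = 200 * (m : ℝ) + 100 := by
      rw [hsumxb] at h1z; linarith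
    have hxl : x (Fin.last m) = 100 := by
      have hs : ∑ i, x i = (∑ i : Fin m, x i.castSucc) + x (Fin.last m) :=
        Fin.sum_univ_castSucc x
      rw [Finset.sum_congr rfl fun i _ => hxe i] at hs
      simp [Finset.sum_const, Finset.card_univ] at hs
      rw [hsumx] at hs
      linarith
    ext i
    rcases lt_or_ge (i : ℕ) m with h | h
    · have : i = (⟨(i : ℕ), h⟩ : Fin m).castSucc := Fin.ext rfl
      rw [this, hxe, hxbc]
    · have : i = Fin.last m := Fin.ext (by simp only [Fin.val_last]; have := i.is_lt; omega)
      rw [this, hxl, hxbl]
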